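/- Approximation of the identity: let f be q-integrable on L(γ) with entire moment generating series and ∫_γ f = 1, set f_k = q^{-k} Q^{-k} f (so f_k(x) = q^{-k}f(q^{-k}x)). Then μ_{l,γ}(f_k) = q^{kl} μ_{l,γ}(f); and if g is defined with all q-derivatives on a domain Ω with |∂^k g(x)| = O(R_x^k) for each x, then (f_l *_γ g)(x) → g(x) pointwise on Ω as l → ∞; the convergence is uniform when the bound R_x can be chosen uniformly in x. -/

import Mathlib

open scoped BigOperators

noncomputable section

/-- finite q-Pochhammer symbol `(a;q)_k` -/
def qPoch (q a : ℝ) (k : ℕ) : ℝ := ∏ j ∈ Finset.range k, (1 - a * q ^ j)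

/-- infinite q-Pochhammer symbol `(a;q)_∞` -/
def qPochInf (q a : ℝ) : ℝ := ∏' j : ℕ, (1 - a * q ^ j)

/-- q-integral over the lattice `L(γ) = {± q^k γ}` -/
def qInt (q γ : ℝ) (f : ℝ → ℝ) : ℝ :=
  (1 - q) * ∑' k : ℤ, (q ^ k * γ) * (f (q ^ k * γ) + f (-(q ^ k * γ)))

/-- k-th q-moment -/
def qMoment (q γ : ℝ) (e : ℕ) (f : ℝ → ℝ) : ℝ :=
  q ^ (e * (e + 1) / 2) * qInt q γ (fun x => f x * x ^ e)

/-- k-th strict q-moment -/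
def qNu (q γ : ℝ) (e : ℕ) (f : ℝ → ℝ) : ℝ :=
  q ^ (e * (e + 1) / 2) * qInt q γ (fun x => |f x * x ^ e|)

/-- q-derivative -/
def qDeriv (q : ℝ) (f : ℝ → ℝ) : ℝ → ℝ := fun x => (f x - f (q * x)) / ((1 - q) * x)

/-- q-factorial `[e]_q!` -/
def qFact (q : ℝ) (e : ℕ) : ℝ := qPoch q q e / (1 - q) ^ e

/-- q-binomial coefficient -/
def qBinom (q : ℝ) (n k : ℕ) : ℝ := qPoch q q n / (qPoch q q k * qPoch q q (n - k))

/-- q-convolution -/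
def qConv (q γ : ℝ) (f g : ℝ → ℝ) : ℝ → ℝ :=
  fun x => ∑' e : ℕ, (-1) ^ e * qMoment q γ e f / qFact q e * (qDeriv q)^[e] g x

/-- the q-Gaussian `e_{q²}(-x²)` -/
def qGauss (q : ℝ) : ℝ → ℝ := fun x => 1 / qPochInf (q ^ 2) (-(x ^ 2))

/-- discrete q-Hermite II polynomials -/
def qHermiteII (q : ℝ) (k : ℕ) (x : ℝ) : ℝ :=
  qPoch q q k * ∑ l ∈ Finset.range (k / 2 + 1),
    (-1) ^ l * q ^ (2 * l ^ 2 + l) / q ^ (2 * l * k) * x ^ (k - 2 * l) /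
      (qPoch (q ^ 2) (q ^ 2) l * qPoch q q (k - 2 * l))

/-- discrete delta function on the lattice, supported at `η γ q^p` -/
def qdelta (q γ η : ℝ) (p : ℤ) : ℝ → ℝ := fun x => if x = η * γ * q ^ p then 1 else 0

lemma momshift (q γ : ℝ) (hq0 : 0 < q) (l k : ℕ) (f : ℝ → ℝ) :
    qMoment q γ l (fun x => q ^ (-(k : ℤ)) * f (q ^ (-(k : ℤ)) * x)) =
      q ^ (k * l) * qMoment q γ l f := by
  have hqne : q ≠ 0 := hq0.ne'
  have hkne : (q : ℝ) ^ (k : ℕ) ≠ 0 := pow_ne_zero _ hqne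
  set a : ℤ → ℝ := fun j => (q ^ j * γ) *
    (f (q ^ j * γ) * (q ^ j * γ) ^ l + f (-(q ^ j * γ)) * (-(q ^ j * γ)) ^ l) with ha
  have key : (∑' j : ℤ, (q ^ j * γ) *
      ((q ^ (-(k : ℤ)) * f (q ^ (-(k : ℤ)) * (q ^ j * γ))) * (q ^ j * γ) ^ l +
       (q ^ (-(k : ℤ)) * f (q ^ (-(k : ℤ)) * (-(q ^ j * γ)))) * (-(q ^ j * γ)) ^ l))
      = q ^ (k * l) * ∑' j : ℤ, a j := by
    rw [← tsum_mul_left]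
    calc (∑' j : ℤ, (q ^ j * γ) *
        ((q ^ (-(k : ℤ)) * f (q ^ (-(k : ℤ)) * (q ^ j * γ))) * (q ^ j * γ) ^ l +
         (q ^ (-(k : ℤ)) * f (q ^ (-(k : ℤ)) * (-(q ^ j * γ)))) * (-(q ^ j * γ)) ^ l))
        = ∑' j : ℤ, q ^ (k * l) * a (j - (k : ℤ)) := by
          refine tsum_congr fun j => ?_
          have h1 : (q : ℝ) ^ (j : ℤ) = q ^ (k : ℕ) * q ^ (j - (k : ℤ)) := by
            rw [← zpow_natCast q k, ← zpow_add₀ hqne]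
            congr 1; ring
          have h2 : (q : ℝ) ^ (-(k : ℤ)) = (q ^ (k : ℕ))⁻¹ := by
            rw [zpow_neg, zpow_natCast]
          have harg1 : q ^ (-(k : ℤ)) * (q ^ (j : ℤ) * γ) = q ^ (j - (k : ℤ)) * γ := by
            rw [h2, h1]; field_simp
          have harg2 : q ^ (-(k : ℤ)) * (-(q ^ (j : ℤ) * γ)) = -(q ^ (j - (k : ℤ)) * γ) := by
            rw [h2, h1]; field_simp
          rw [harg1, harg2, ha]
          simp only
          rw [h1, h2]
          field_simp
          ring
      _ = ∑' j : ℤ, q ^ (k * l) * a j :=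
          (Equiv.subRight (k : ℤ)).tsum_eq (fun j => q ^ (k * l) * a j)
  simp only [qMoment, qInt]
  rw [key]; ring


lemma qFact_pos {q : ℝ} (hq : q ∈ Set.Ioo (0:ℝ) 1) (e : ℕ) : 0 < qFact q e := by
  obtain ⟨hq0, hq1⟩ := hq
  apply div_pos
  · apply Finset.prod_pos
    intro j _
    have : q * q ^ j ≤ q * 1 := by
      apply mul_le_mul_of_nonneg_left _ hq0.le
      exact pow_le_one₀ hq0.le hq1.le
    linarith
  · have h1q : 0 < 1 - q := by linarith
    positivity

lemma unifconv (q γ : ℝ) (hq : q ∈ Set.Ioo (0 : ℝ) 1) (f : ℝ → ℝ)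
    (hfE : ∀ b : ℝ, Summable (fun l : ℕ => |qMoment q γ l f| * b ^ l / qFact q l))
    (hf1 : qInt q γ f = 1)
    (Ω : Set ℝ) (g : ℝ → ℝ)
    (hB : ∃ R > (0 : ℝ), ∃ C > (0 : ℝ), ∀ x ∈ Ω, ∀ e : ℕ, |(qDeriv q)^[e] g x| ≤ C * R ^ e) :
    TendstoUniformlyOn
      (fun l : ℕ => fun x => qConv q γ (fun y => q ^ (-(l : ℤ)) * f (q ^ (-(l : ℤ)) * y)) g x)
      g Filter.atTop Ω := by
  obtain ⟨hq0, hq1⟩ := hq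
  obtain ⟨R, hR, C, hC, hB⟩ := hB
  set b : ℕ → ℝ := fun e => C * (|qMoment q γ e f| * R ^ e / qFact q e) with hbdef
  have hb : Summable b := (hfE R).mul_left C
  have hbnn : ∀ e, 0 ≤ b e := by
    intro e
    have := (qFact_pos ⟨hq0, hq1⟩ e)
    positivity
  -- per-term definition and bound
  set t : ℕ → ℕ → ℝ → ℝ := fun l e x =>
    (-1) ^ e * (q ^ (l * e) * qMoment q γ e f) / qFact q e * (qDeriv q)^[e] g x with htdef
  have hconv : ∀ l : ℕ, ∀ x : ℝ,
      qConv q γ (fun y => q ^ (-(l : ℤ)) * f (q ^ (-(l : ℤ)) * y)) g x = ∑' e, t l e x := by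
    intro l x
    refine tsum_congr fun e => ?_
    rw [momshift q γ hq0 e l f]
  have htabs : ∀ l e x, |t l e x| =
      q ^ (l * e) * |qMoment q γ e f| / qFact q e * |(qDeriv q)^[e] g x| := by
    intro l e x
    have hf := (qFact_pos ⟨hq0, hq1⟩ e)
    rw [htdef]
    simp only
    rw [abs_mul, abs_div, abs_mul, abs_mul, abs_pow, abs_neg, abs_one, one_pow, one_mul,
      abs_pow, abs_of_pos hq0, abs_of_pos hf]
  have htb : ∀ l e, ∀ x ∈ Ω, |t l e x| ≤ q ^ (l * e) * b e := by
    intro l e x hx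
    rw [htabs]
    have hf := (qFact_pos ⟨hq0, hq1⟩ e)
    have h1 : |qMoment q γ e f| / qFact q e * |(qDeriv q)^[e] g x| ≤
        |qMoment q γ e f| / qFact q e * (C * R ^ e) := by
      apply mul_le_mul_of_nonneg_left (hB x hx e) (by positivity)
    calc q ^ (l * e) * |qMoment q γ e f| / qFact q e * |(qDeriv q)^[e] g x|
        = q ^ (l * e) * (|qMoment q γ e f| / qFact q e * |(qDeriv q)^[e] g x|) := by ring
      _ ≤ q ^ (l * e) * (|qMoment q γ e f| / qFact q e * (C * R ^ e)) := by
          apply mul_le_mul_of_nonneg_left h1 (by positivity)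
      _ = q ^ (l * e) * b e := by rw [hbdef]; ring
  have hple1 : ∀ l e : ℕ, q ^ (l * e) ≤ 1 := fun l e => pow_le_one₀ hq0.le hq1.le
  have hsumt : ∀ l, ∀ x ∈ Ω, Summable (fun e => t l e x) := by
    intro l x hx
    apply Summable.of_norm_bounded hb
    intro e
    rw [Real.norm_eq_abs]
    exact (htb l e x hx).trans (by nlinarith [hbnn e, hple1 l e, pow_nonneg hq0.le (l*e)])
  -- the zeroth term is g x
  have ht0 : ∀ l x, t l 0 x = g x := by
    intro l x
    rw [htdef]
    simp only [pow_zero, mul_zero, Function.iterate_zero, id_eq, one_mul]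
    have hm0 : qMoment q γ 0 f = 1 := by
      have hfn : (fun x : ℝ => f x * x ^ 0) = f := by funext x; simp
      rw [qMoment, hfn, hf1]; norm_num
    have hq0' : qFact q 0 = 1 := by simp [qFact, qPoch]
    rw [hm0, hq0']
    ring
  -- tail sum bound
  set T : ℝ := ∑' e : ℕ, b (e + 1) with hT
  have hbs : Summable (fun e => b (e + 1)) := (summable_nat_add_iff 1).2 hb
  have hTnn : 0 ≤ T := tsum_nonneg fun e => hbnn _
  have hdiff : ∀ l : ℕ, ∀ x ∈ Ω,
      |qConv q γ (fun y => q ^ (-(l : ℤ)) * f (q ^ (-(l : ℤ)) * y)) g x - g x| ≤ T * q ^ l := by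
    intro l x hx
    rw [hconv l x, Summable.tsum_eq_zero_add (hsumt l x hx), ht0, add_sub_cancel_left]
    have hsum1 : Summable (fun e => t l (e + 1) x) :=
      (summable_nat_add_iff 1).2 (hsumt l x hx)
    calc |∑' e : ℕ, t l (e + 1) x| ≤ ∑' e : ℕ, |t l (e + 1) x| := by
          simpa using norm_tsum_le_tsum_norm (f := fun e => t l (e+1) x) hsum1.abs
      _ ≤ ∑' e : ℕ, q ^ l * b (e + 1) := by
          apply Summable.tsum_le_tsum _ hsum1.abs (hbs.mul_left _)
          intro e
          refine (htb l (e+1) x hx).trans ?_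
          have h1 : q ^ (l * (e + 1)) ≤ q ^ l := by
            apply pow_le_pow_of_le_one hq0.le hq1.le
            exact Nat.le_mul_of_pos_right l (Nat.succ_pos e)
          exact mul_le_mul_of_nonneg_right h1 (hbnn _)
      _ = T * q ^ l := by rw [tsum_mul_left, hT]; ring
  -- conclude
  have hlim : Filter.Tendsto (fun l : ℕ => T * q ^ l) Filter.atTop (nhds 0) := by
    rw [show (0:ℝ) = T * 0 by ring]
    exact (tendsto_pow_atTop_nhds_zero_of_lt_one hq0.le hq1).const_mul T
  rw [Metric.tendstoUniformlyOn_iff]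
  intro ε hε
  have hev : ∀ᶠ l : ℕ in Filter.atTop, T * q ^ l < ε := hlim.eventually (gt_mem_nhds hε)
  filter_upwards [hev] with l hl x hx
  rw [Real.dist_eq, abs_sub_comm]
  exact lt_of_le_of_lt (hdiff l x hx) hl

/-- Approximation of the identity by q-shifted kernels. -/
theorem stmt16 (q γ : ℝ) (hq : q ∈ Set.Ioo (0 : ℝ) 1) (hγ : 0 < γ)
    (f : ℝ → ℝ)
    (hfE : ∀ b : ℝ, Summable (fun l : ℕ => |qMoment q γ l f| * b ^ l / qFact q l))
    (hf1 : qInt q γ f = 1) :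
    (∀ l k : ℕ,
      qMoment q γ l (fun x => q ^ (-(k : ℤ)) * f (q ^ (-(k : ℤ)) * x)) =
        q ^ (k * l) * qMoment q γ l f) ∧
    (∀ (Ω : Set ℝ) (g : ℝ → ℝ),
      (∀ x ∈ Ω, ∃ R > (0 : ℝ), ∃ C > (0 : ℝ), ∀ e : ℕ, |(qDeriv q)^[e] g x| ≤ C * R ^ e) →
      ∀ x ∈ Ω, Filter.Tendsto
        (fun l : ℕ => qConv q γ (fun y => q ^ (-(l : ℤ)) * f (q ^ (-(l : ℤ)) * y)) g x)
        Filter.atTop (nhds (g x))) ∧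
    (∀ (Ω : Set ℝ) (g : ℝ → ℝ),
      (∃ R > (0 : ℝ), ∃ C > (0 : ℝ), ∀ x ∈ Ω, ∀ e : ℕ, |(qDeriv q)^[e] g x| ≤ C * R ^ e) →
      TendstoUniformlyOn
        (fun l : ℕ => fun x => qConv q γ (fun y => q ^ (-(l : ℤ)) * f (q ^ (-(l : ℤ)) * y)) g x)
        g Filter.atTop Ω) := by
  refine ⟨fun l k => momshift q γ hq.1 l k f, ?_, fun Ω g hB => unifconv q γ hq f hfE hf1 Ω g hB⟩
  intro Ω g hB x hx
  obtain ⟨R, hR, C, hC, hb⟩ := hB x hx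
  have hu := unifconv q γ hq f hfE hf1 {x} g
    ⟨R, hR, C, hC, fun y hy e => by rw [Set.mem_singleton_iff] at hy; subst hy; exact hb e⟩
  exact hu.tendsto_at (Set.mem_singleton x)
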